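/- arXiv:0906.2989 — 2 statements merged into one kernel-verified Lean document; each statement's English description precedes it below -/
import Mathlib

section
/- Let X be a Banach space and Y a closed subspace. Then there exists a continuous (not necessarily linear) map H : Y* → X* and a constant M ≥ 1 such that H(y*)(y) = y*(y) for every y* ∈ Y* and y ∈ Y, and ‖H(y*)‖_{X*} ≤ M‖y*‖_{Y*} for every y* ∈ Y*. -/
open Set Metric

section


section

variable {E F : Type*} [NormedAddCommGroup E] [NormedSpace ℝ E]
    [NormedAddCommGroup F] [NormedSpace ℝ F]

/-- Approximate continuous selection via a partition of unity. -/
lemma approx_sel (T : E →L[ℝ] F) (C : ℝ) (hC : 0 ≤ C)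
    (hsur : ∀ y : F, ∃ x : E, T x = y ∧ ‖x‖ ≤ C * ‖y‖) :
    ∃ g : F → E, Continuous g ∧ (∀ y, ‖T (g y) - y‖ ≤ (1/2) * ‖y‖) ∧
      (∀ y, ‖g y‖ ≤ (2*C) * ‖y‖) := by
  classical
  choose x hx hxn using hsur
  set U : {y : F // y ≠ 0} → Set {y : F // y ≠ 0} :=
    fun i => Subtype.val ⁻¹' ball (i : F) (‖(i : F)‖/3) with hUdef
  have hUo : ∀ i, IsOpen (U i) := fun i => isOpen_ball.preimage continuous_subtype_val
  have hUc : (univ : Set {y : F // y ≠ 0}) ⊆ ⋃ i, U i := by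
    intro y _
    refine mem_iUnion.2 ⟨y, ?_⟩
    have : (0:ℝ) < ‖(y : F)‖ := norm_pos_iff.2 y.2
    simp only [hUdef, mem_preimage, mem_ball, dist_self]
    linarith
  obtain ⟨ρ, hρ⟩ := PartitionOfUnity.exists_isSubordinate isClosed_univ U hUo hUc
  have key : ∀ (y i : {y : F // y ≠ 0}), ρ i y ≠ 0 →
      ‖(i : F)‖ ≤ 3/2 * ‖(y : F)‖ ∧ ‖(i : F) - (y : F)‖ ≤ 1/2 * ‖(y : F)‖ := by
    intro y i hi
    have h1 : y ∈ U i := hρ i (subset_closure (Function.mem_support.2 hi))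
    have h2 : ‖(y : F) - (i : F)‖ < ‖(i : F)‖/3 := by
      rw [← dist_eq_norm]; exact h1
    have h3 : ‖(i : F)‖ ≤ ‖(i : F) - (y : F)‖ + ‖(y : F)‖ := by
      simpa using norm_add_le ((i : F) - (y : F)) (y : F)
    have h4 : ‖(i : F) - (y : F)‖ = ‖(y : F) - (i : F)‖ := norm_sub_rev _ _
    constructor <;> linarith
  set g' : {y : F // y ≠ 0} → E := fun y => ∑ᶠ i, ρ i y • x (i : F) with hg'def
  have hg'c : Continuous g' :=
    PartitionOfUnity.IsSubordinate.continuous_finsum_smul hUo hρ fun i => continuousOn_const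
  have hg'eq : ∀ y, g' y = ∑ i ∈ ρ.finsupport y, ρ i y • x (i : F) := fun y =>
    (ρ.sum_finsupport_smul_eq_finsum (fun i _ => x (i : F))).symm
  have hsum1 : ∀ y, ∑ i ∈ ρ.finsupport y, ρ i y = 1 := fun y => ρ.sum_finsupport (mem_univ y)
  have hg'err : ∀ y : {y : F // y ≠ 0}, ‖T (g' y) - (y:F)‖ ≤ 1/2 * ‖(y:F)‖ := by
    intro y
    have hTg : T (g' y) - (y:F) = ∑ i ∈ ρ.finsupport y, ρ i y • ((i:F) - (y:F)) := by
      have h1 : T (g' y) = ∑ i ∈ ρ.finsupport y, ρ i y • ((i:F) : F) := by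
        rw [hg'eq, map_sum]
        exact Finset.sum_congr rfl fun i _ => by rw [map_smul, hx]
      have h2 : (y:F) = ∑ i ∈ ρ.finsupport y, ρ i y • (y:F) := by
        rw [← Finset.sum_smul, hsum1, one_smul]
      rw [h1]
      conv_lhs => rw [h2]
      rw [← Finset.sum_sub_distrib]
      exact Finset.sum_congr rfl fun i _ => (smul_sub _ _ _).symm
    rw [hTg]
    calc ‖∑ i ∈ ρ.finsupport y, ρ i y • ((i:F) - (y:F))‖
        ≤ ∑ i ∈ ρ.finsupport y, ‖ρ i y • ((i:F) - (y:F))‖ := norm_sum_le _ _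
      _ ≤ ∑ i ∈ ρ.finsupport y, ρ i y * (1/2 * ‖(y:F)‖) := by
          refine Finset.sum_le_sum fun i hi => ?_
          rw [norm_smul, Real.norm_eq_abs, abs_of_nonneg (ρ.nonneg i y)]
          exact mul_le_mul_of_nonneg_left
            ((key y i ((ρ.mem_finsupport y).1 hi)).2) (ρ.nonneg i y)
      _ = 1/2 * ‖(y:F)‖ := by rw [← Finset.sum_mul, hsum1, one_mul]
  have hg'b : ∀ y : {y : F // y ≠ 0}, ‖g' y‖ ≤ 2*C * ‖(y:F)‖ := by
    intro y
    rw [hg'eq]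
    calc ‖∑ i ∈ ρ.finsupport y, ρ i y • x (i:F)‖
        ≤ ∑ i ∈ ρ.finsupport y, ‖ρ i y • x (i:F)‖ := norm_sum_le _ _
      _ ≤ ∑ i ∈ ρ.finsupport y, ρ i y * (2*C * ‖(y:F)‖) := by
          refine Finset.sum_le_sum fun i hi => ?_
          rw [norm_smul, Real.norm_eq_abs, abs_of_nonneg (ρ.nonneg i y)]
          refine mul_le_mul_of_nonneg_left ?_ (ρ.nonneg i y)
          have h1 := (key y i ((ρ.mem_finsupport y).1 hi)).1
          have h2 := hxn (i:F)
          have h3 : C * ‖(i:F)‖ ≤ C * (3/2 * ‖(y:F)‖) := by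
            exact mul_le_mul_of_nonneg_left h1 hC
          have h4 : (0:ℝ) ≤ ‖(y:F)‖ := norm_nonneg _
          nlinarith
      _ = 2*C * ‖(y:F)‖ := by rw [← Finset.sum_mul, hsum1, one_mul]
  set G : F → E := fun y => if h : y = 0 then 0 else g' ⟨y, h⟩ with hGdef
  have hGval : ∀ (y : F) (h : y ≠ 0), G y = g' ⟨y, h⟩ := fun y h => dif_neg h
  have hGb : ∀ y, ‖G y‖ ≤ 2*C * ‖y‖ := by
    intro y
    by_cases h : y = 0
    · simp [hGdef, h]
    · rw [hGval y h]; exact hg'b ⟨y, h⟩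
  have hGerr : ∀ y, ‖T (G y) - y‖ ≤ 1/2 * ‖y‖ := by
    intro y
    by_cases h : y = 0
    · simp [hGdef, h]
    · rw [hGval y h]; exact hg'err ⟨y, h⟩
  refine ⟨G, ?_, hGerr, hGb⟩
  rw [continuous_iff_continuousAt]
  intro y₀
  by_cases h : y₀ = 0
  · subst h
    have hG0 : G 0 = 0 := dif_pos rfl
    rw [ContinuousAt, hG0]
    have : Filter.Tendsto (fun y : F => 2*C*‖y‖) (nhds 0) (nhds 0) := by
      have := (continuous_norm (E := F)).tendsto (0:F)
      simpa using this.const_mul (2*C)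
    exact squeeze_zero_norm hGb this
  · have hopen : IsOpen {y : F | y ≠ 0} := isOpen_compl_singleton
    have hco : ContinuousOn G {y : F | y ≠ 0} := by
      rw [continuousOn_iff_continuous_restrict]
      have : Set.domRestrict {y : F | y ≠ 0} G = fun y : {y : F // y ≠ 0} => g' ⟨y.1, y.2⟩ := by
        funext y; exact hGval y.1 y.2
      rw [this]
      exact hg'c.comp (by fun_prop)
    exact hco.continuousAt (hopen.mem_nhds h)



lemma bartle_graves [CompleteSpace E] (T : E →L[ℝ] F) (C : ℝ) (hC : 0 ≤ C)
    (hsur : ∀ y : F, ∃ x : E, T x = y ∧ ‖x‖ ≤ C * ‖y‖) :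
    ∃ s : F → E, Continuous s ∧ (∀ y, T (s y) = y) ∧ ∀ y, ‖s y‖ ≤ 4*C*‖y‖ := by
  obtain ⟨g, hgc, hge, hgb⟩ := approx_sel T C hC hsur
  set r : ℕ → F → F := fun n => (fun y => y - T (g y))^[n] with hrdef
  have hrsucc : ∀ n y, r (n+1) y = r n y - T (g (r n y)) := fun n y =>
    Function.iterate_succ_apply' _ n y
  have hrc : ∀ n, Continuous (r n) := by
    intro n
    induction n with
    | zero => exact continuous_id
    | succ n ih =>
      have : r (n+1) = fun y => r n y - T (g (r n y)) := funext (hrsucc n)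
      rw [this]
      exact ih.sub (T.continuous.comp (hgc.comp ih))
  have hrb : ∀ n y, ‖r n y‖ ≤ (1/2)^n * ‖y‖ := by
    intro n
    induction n with
    | zero => intro y; simp [hrdef]
    | succ n ih =>
      intro y
      rw [hrsucc]
      have h1 : ‖r n y - T (g (r n y))‖ = ‖T (g (r n y)) - r n y‖ := norm_sub_rev _ _
      rw [h1]
      calc ‖T (g (r n y)) - r n y‖ ≤ 1/2 * ‖r n y‖ := hge _
        _ ≤ 1/2 * ((1/2)^n * ‖y‖) := by
            have := ih y; linarith [ih y]
        _ = (1/2)^(n+1) * ‖y‖ := by ring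
  have hterm : ∀ n (y : F), ‖g (r n y)‖ ≤ 2*C*‖y‖ * (1/2)^n := by
    intro n y
    calc ‖g (r n y)‖ ≤ 2*C * ‖r n y‖ := hgb _
      _ ≤ 2*C * ((1/2)^n * ‖y‖) := by
          exact mul_le_mul_of_nonneg_left (hrb n y) (by positivity)
      _ = 2*C*‖y‖ * (1/2)^n := by ring
  have hsummable : ∀ y : F, Summable fun n => g (r n y) := by
    intro y
    refine Summable.of_norm (Summable.of_nonneg_of_le (fun n => norm_nonneg _)
      (fun n => hterm n y) ?_)
    exact (summable_geometric_of_lt_one (by norm_num) (by norm_num)).mul_left _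
  set s : F → E := fun y => ∑' n, g (r n y) with hsdef
  have hsr : ∀ y, T (s y) = y := by
    intro y
    have hhs : HasSum (fun n => g (r n y)) (s y) := (hsummable y).hasSum
    have hTs : HasSum (fun n => T (g (r n y))) (T (s y)) := T.hasSum hhs
    have hsum2 : Summable fun n => T (g (r n y)) := ⟨_, hTs⟩
    have htel : ∀ n, T (g (r n y)) = r n y - r (n+1) y := by
      intro n; rw [hrsucc]; abel
    have hlim : Filter.Tendsto (fun n => ∑ i ∈ Finset.range n, T (g (r i y)))
        Filter.atTop (nhds y) := by
      have heq : ∀ n, ∑ i ∈ Finset.range n, T (g (r i y)) = y - r n y := by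
        intro n
        calc ∑ i ∈ Finset.range n, T (g (r i y))
            = ∑ i ∈ Finset.range n, (r i y - r (i+1) y) :=
              Finset.sum_congr rfl fun i _ => htel i
          _ = r 0 y - r n y := Finset.sum_range_sub' (fun i => r i y) n
          _ = y - r n y := rfl
      simp only [heq]
      have : Filter.Tendsto (fun n => r n y) Filter.atTop (nhds 0) := by
        apply squeeze_zero_norm (fun n => hrb n y)
        have := tendsto_pow_atTop_nhds_zero_of_lt_one (r := (1/2:ℝ)) (by norm_num) (by norm_num)
        simpa using this.mul_const ‖y‖
      simpa using (tendsto_const_nhds (x := y)).sub this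
    have hy : HasSum (fun n => T (g (r n y))) y :=
      (hsum2.hasSum_iff_tendsto_nat).2 hlim
    exact hTs.unique hy
  have hsb : ∀ y, ‖s y‖ ≤ 4*C*‖y‖ := by
    intro y
    have hnorm : Summable fun n => ‖g (r n y)‖ :=
      Summable.of_nonneg_of_le (fun n => norm_nonneg _) (fun n => hterm n y)
        ((summable_geometric_of_lt_one (by norm_num) (by norm_num)).mul_left _)
    calc ‖s y‖ ≤ ∑' n, ‖g (r n y)‖ := norm_tsum_le_tsum_norm hnorm
      _ ≤ ∑' n : ℕ, 2*C*‖y‖ * (1/2)^n := by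
          refine Summable.tsum_le_tsum (fun n => hterm n y) hnorm ?_
          exact (summable_geometric_of_lt_one (by norm_num) (by norm_num)).mul_left _
      _ = 2*C*‖y‖ * 2 := by
          rw [tsum_mul_left, tsum_geometric_of_lt_one (by norm_num) (by norm_num)]
          norm_num
      _ = 4*C*‖y‖ := by ring
  refine ⟨s, ?_, hsr, hsb⟩
  rw [continuous_iff_continuousAt]
  intro y₀
  have hopen : IsOpen {y : F | ‖y‖ < ‖y₀‖ + 1} :=
    isOpen_lt continuous_norm continuous_const
  have hco : ContinuousOn s {y : F | ‖y‖ < ‖y₀‖ + 1} := by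
    refine continuousOn_tsum (f := fun n y => g (r n y)) (u := fun n => 2*C*(‖y₀‖+1) * (1/2)^n)
      (fun n => (hgc.comp (hrc n)).continuousOn) ?_ ?_
    · exact (summable_geometric_of_lt_one (by norm_num) (by norm_num)).mul_left _
    · intro n y hy
      calc ‖g (r n y)‖ ≤ 2*C*‖y‖ * (1/2)^n := hterm n y
        _ ≤ 2*C*(‖y₀‖+1) * (1/2)^n := by
            have h1 : ‖y‖ ≤ ‖y₀‖ + 1 := le_of_lt hy
            have h2 : (0:ℝ) ≤ (1/2:ℝ)^n := by positivity
            exact mul_le_mul_of_nonneg_right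
              (mul_le_mul_of_nonneg_left h1 (by linarith : (0:ℝ) ≤ 2*C)) h2
  exact hco.continuousAt (hopen.mem_nhds (show ‖y₀‖ < ‖y₀‖ + 1 from lt_add_one _))

end



set_option maxHeartbeats 1000000 in
/-- Continuous bounded selection of the Hahn–Banach extension operator. -/
theorem stmt_1 {X : Type*} [NormedAddCommGroup X] [NormedSpace ℝ X] [CompleteSpace X]
    (Y : Subspace ℝ X) (hY : IsClosed (Y : Set X)) :
    ∃ (H : (Y →L[ℝ] ℝ) → (X →L[ℝ] ℝ)) (M : ℝ), 1 ≤ M ∧ Continuous H ∧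
      (∀ (φ : Y →L[ℝ] ℝ) (y : Y), H φ (y : X) = φ y) ∧
      (∀ φ : Y →L[ℝ] ℝ, ‖H φ‖ ≤ M * ‖φ‖) := by
  set T : (X →L[ℝ] ℝ) →L[ℝ] (Y →L[ℝ] ℝ) :=
    (ContinuousLinearMap.compL ℝ Y X ℝ).flip Y.subtypeL with hTdef
  have hTapp : ∀ (ψ : X →L[ℝ] ℝ) (y : Y), T ψ y = ψ (y : X) := fun ψ y => rfl
  have hsur : ∀ φ : Y →L[ℝ] ℝ, ∃ ψ : X →L[ℝ] ℝ, T ψ = φ ∧ ‖ψ‖ ≤ 1 * ‖φ‖ := by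
    intro φ
    obtain ⟨ψ, hext, hnorm⟩ := exists_extension_norm_eq Y φ
    refine ⟨ψ, ?_, by rw [one_mul, hnorm]⟩
    ext y
    rw [hTapp, hext]
  obtain ⟨s, hsc, hsr, hsb⟩ := bartle_graves (E := X →L[ℝ] ℝ) (F := Y →L[ℝ] ℝ) T (1:ℝ) zero_le_one hsur
  refine ⟨s, (4:ℝ), by norm_num, hsc, ?_, ?_⟩
  · intro φ y
    have := hsr φ
    calc s φ (y : X) = T (s φ) y := (hTapp _ _).symm
      _ = φ y := by rw [this]
  · intro φ
    have := hsb φ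
    linarith [hsb φ]
end
end

section
/- Let W and Z be Banach spaces and T : W → Z a bounded linear surjection. Then there exists a continuous map B : Z → W and a constant M > 1 such that T(B(z)) = z for every z ∈ Z and ‖B(z)‖ ≤ M‖z‖ for every z ∈ Z. -/
open Metric Set Function Filter Topology

/-- Continuous approximate selection via a partition of unity on the unit sphere. -/
theorem bg_approx {W Z : Type*} [NormedAddCommGroup W] [NormedSpace ℝ W] [CompleteSpace W]
    [NormedAddCommGroup Z] [NormedSpace ℝ Z] [CompleteSpace Z]
    (T : W →L[ℝ] Z) (hT : Function.Surjective T) :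
    ∃ (g : Z → W) (C : ℝ), 0 < C ∧ Continuous g ∧
      (∀ z : Z, ‖g z‖ ≤ C * ‖z‖) ∧ (∀ z : Z, ‖T (g z) - z‖ ≤ (1/2) * ‖z‖) := by
  obtain ⟨C, hC0, hC⟩ := ContinuousLinearMap.exists_preimage_norm_le T hT
  choose w hw1 hw2 using hC
  set X := Metric.sphere (0 : Z) 1 with hX
  set U : X → Set X := fun u => {v : X | ‖(v : Z) - (u : Z)‖ < 1/2} with hU
  have hUo : ∀ u, IsOpen (U u) := by
    intro u
    have : U u = (Subtype.val : X → Z) ⁻¹' Metric.ball (u : Z) (1/2) := by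
      ext v; simp [hU, Metric.mem_ball, dist_eq_norm, Subtype.dist_eq]
    rw [this]
    exact Metric.isOpen_ball.preimage continuous_subtype_val
  have hUc : (Set.univ : Set X) ⊆ ⋃ u, U u := by
    intro v _
    exact Set.mem_iUnion.2 ⟨v, by simp [hU]⟩
  obtain ⟨ρ, hρ⟩ := PartitionOfUnity.exists_isSubordinate isClosed_univ U hUo hUc
  set hS : X → W := fun v => ∑ᶠ u : X, ρ u v • w (u : Z) with hhS
  have hScont : Continuous hS := by
    apply ρ.continuous_finsum_smul
    intro i x _
    exact continuousAt_const
  have key : ∀ v : X, ‖hS v‖ ≤ C ∧ ‖T (hS v) - (v : Z)‖ ≤ 1/2 := by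
    intro v
    have hfin : (Function.support fun u : X => ρ u v • w (u : Z)) ⊆ ↑(ρ.finsupport v) := by
      intro u hu
      rw [ρ.coe_finsupport]
      intro h0
      apply hu
      simp only [Function.mem_support, not_not] at h0
      simp [h0]
    have hSsum : hS v = ∑ u ∈ ρ.finsupport v, ρ u v • w (u : Z) :=
      finsum_eq_sum_of_support_subset _ hfin
    have hone : ∑ u ∈ ρ.finsupport v, ρ u v = 1 := ρ.sum_finsupport (Set.mem_univ v)
    have hmem : ∀ u ∈ ρ.finsupport v, ‖(u : Z) - (v : Z)‖ ≤ 1/2 := by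
      intro u hu
      have : v ∈ Function.support fun x => ρ u x := by
        have := (ρ.mem_finsupport v).1 hu
        simpa [Function.mem_support] using this
      have hv : v ∈ U u := hρ u (subset_tsupport _ this)
      have := hv
      simp only [hU, Set.mem_setOf_eq] at this
      rw [norm_sub_rev]
      linarith
    constructor
    · rw [hSsum]
      calc ‖∑ u ∈ ρ.finsupport v, ρ u v • w (u : Z)‖
          ≤ ∑ u ∈ ρ.finsupport v, ‖ρ u v • w (u : Z)‖ := norm_sum_le _ _
        _ ≤ ∑ u ∈ ρ.finsupport v, ρ u v * C := by
            apply Finset.sum_le_sum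
            intro u hu
            rw [norm_smul, Real.norm_eq_abs, abs_of_nonneg (ρ.nonneg u v)]
            have h1 : ‖(u : Z)‖ = 1 := by
              have := u.2; simpa [mem_sphere_iff_norm] using this
            have := hw2 (u : Z)
            rw [h1, mul_one] at this
            exact mul_le_mul_of_nonneg_left this (ρ.nonneg u v)
        _ = C := by rw [← Finset.sum_mul, hone, one_mul]
    · have hT' : T (hS v) - (v : Z) = ∑ u ∈ ρ.finsupport v, ρ u v • ((u : Z) - (v : Z)) := by
        rw [hSsum, map_sum]
        simp only [map_smul, hw1, smul_sub]
        rw [Finset.sum_sub_distrib, ← Finset.sum_smul, hone, one_smul]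
      rw [hT']
      calc ‖∑ u ∈ ρ.finsupport v, ρ u v • ((u : Z) - (v : Z))‖
          ≤ ∑ u ∈ ρ.finsupport v, ‖ρ u v • ((u : Z) - (v : Z))‖ := norm_sum_le _ _
        _ ≤ ∑ u ∈ ρ.finsupport v, ρ u v * (1/2) := by
            apply Finset.sum_le_sum
            intro u hu
            rw [norm_smul, Real.norm_eq_abs, abs_of_nonneg (ρ.nonneg u v)]
            exact mul_le_mul_of_nonneg_left (hmem u hu) (ρ.nonneg u v)
        _ = 1/2 := by rw [← Finset.sum_mul, hone, one_mul]
  -- now extend to all of Z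
  classical
  set p : {z : Z // z ≠ 0} → X := fun z => ⟨‖(z : Z)‖⁻¹ • (z : Z), by
    have h0 : ‖(z : Z)‖ ≠ 0 := norm_ne_zero_iff.2 z.2
    rw [hX, mem_sphere_zero_iff_norm, norm_smul, norm_inv, norm_norm, inv_mul_cancel₀ h0]⟩
    with hp
  have hpc : Continuous p := by
    apply Continuous.subtype_mk
    exact ((continuous_norm.comp continuous_subtype_val).inv₀
      (fun z : {z : Z // z ≠ 0} => norm_ne_zero_iff.2 z.2)).smul continuous_subtype_val
  set G : {z : Z // z ≠ 0} → W := fun z => ‖(z : Z)‖ • hS (p z) with hG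
  have hGc : Continuous G :=
    (continuous_norm.comp continuous_subtype_val).smul (hScont.comp hpc)
  set g : Z → W := fun z => if hz : z = 0 then 0 else G ⟨z, hz⟩ with hg
  have hgb : ∀ z : Z, ‖g z‖ ≤ C * ‖z‖ := by
    intro z
    by_cases hz : z = 0
    · simp [hg, hz]
    · rw [hg]
      simp only [dif_neg hz]
      rw [hG]
      simp only [norm_smul, Real.norm_eq_abs, abs_of_nonneg (norm_nonneg _)]
      rw [mul_comm]
      exact mul_le_mul_of_nonneg_right (key (p ⟨z, hz⟩)).1 (norm_nonneg _)
  have hge : ∀ z : Z, ‖T (g z) - z‖ ≤ (1/2) * ‖z‖ := by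
    intro z
    by_cases hz : z = 0
    · simp [hg, hz]
    · rw [hg]
      simp only [dif_neg hz]
      rw [hG]
      have hz0 : ‖z‖ ≠ 0 := norm_ne_zero_iff.2 hz
      have hpz : ‖z‖ • ((p ⟨z, hz⟩ : X) : Z) = z := by
        rw [hp]
        simp only
        rw [smul_smul, mul_inv_cancel₀ hz0, one_smul]
      have : T (‖z‖ • hS (p ⟨z, hz⟩)) - z = ‖z‖ • (T (hS (p ⟨z, hz⟩)) - ((p ⟨z, hz⟩ : X) : Z)) := by
        rw [map_smul, smul_sub, hpz]
      rw [this, norm_smul, Real.norm_eq_abs, abs_of_nonneg (norm_nonneg _), mul_comm]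
      exact mul_le_mul_of_nonneg_right (key (p ⟨z, hz⟩)).2 (norm_nonneg _)
  have hgc : Continuous g := by
    rw [continuous_iff_continuousAt]
    intro z
    by_cases hz : z = 0
    · subst hz
      have h0 : g 0 = 0 := by simp [hg]
      rw [ContinuousAt, h0]
      apply squeeze_zero_norm hgb
      have : Tendsto (fun z : Z => C * ‖z‖) (nhds 0) (nhds (C * ‖(0:Z)‖)) :=
        (continuous_const.mul continuous_norm).tendsto 0
      simpa using this
    · have hopen : IsOpen {z : Z | z ≠ 0} := isOpen_ne
      have hco : ContinuousOn g {z : Z | z ≠ 0} := by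
        rw [continuousOn_iff_continuous_restrict]
        have : Set.domRestrict {z : Z | z ≠ 0} g = fun z => G ⟨z.1, z.2⟩ := by
          funext z
          simp [hg, Set.domRestrict, dif_neg z.2]
        rw [this]
        exact hGc.comp (by fun_prop)
      exact hco.continuousAt (hopen.mem_nhds hz)
  exact ⟨g, C, hC0, hgc, hgb, hge⟩

theorem bg_iterate {W Z : Type*} [NormedAddCommGroup W] [NormedSpace ℝ W] [CompleteSpace W]
    [NormedAddCommGroup Z] [NormedSpace ℝ Z] [CompleteSpace Z]
    (T : W →L[ℝ] Z) (hT : Function.Surjective T)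
    (happrox : ∃ (g : Z → W) (C : ℝ), 0 < C ∧ Continuous g ∧
      (∀ z : Z, ‖g z‖ ≤ C * ‖z‖) ∧ (∀ z : Z, ‖T (g z) - z‖ ≤ (1/2) * ‖z‖)) :
    ∃ (B : Z → W) (M : ℝ), 1 < M ∧ Continuous B ∧
      (∀ z : Z, T (B z) = z) ∧ (∀ z : Z, ‖B z‖ ≤ M * ‖z‖) := by
  obtain ⟨g, C, hC0, hgc, hgb, hge⟩ := happrox
  set r : Z → Z := fun z => z - T (g z) with hr
  have hrc : Continuous r := continuous_id.sub (T.continuous.comp hgc)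
  have hrb : ∀ z, ‖r z‖ ≤ (1/2) * ‖z‖ := by
    intro z
    rw [hr]; simpa [norm_sub_rev] using hge z
  have hit : ∀ n (z : Z), ‖r^[n] z‖ ≤ (1/2)^n * ‖z‖ := by
    intro n
    induction n with
    | zero => intro z; simp
    | succ n ih =>
      intro z
      rw [Function.iterate_succ_apply']
      calc ‖r (r^[n] z)‖ ≤ (1/2) * ‖r^[n] z‖ := hrb _
        _ ≤ (1/2) * ((1/2)^n * ‖z‖) := by
            apply mul_le_mul_of_nonneg_left (ih z) (by norm_num)
        _ = (1/2)^(n+1) * ‖z‖ := by ring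
  have hitc : ∀ n, Continuous (fun z => r^[n] z) := by
    intro n
    induction n with
    | zero => simpa using continuous_id'
    | succ n ih =>
      simp only [Function.iterate_succ_apply']
      exact hrc.comp ih
  have hterm : ∀ n (z : Z), ‖g (r^[n] z)‖ ≤ C * (1/2)^n * ‖z‖ := by
    intro n z
    calc ‖g (r^[n] z)‖ ≤ C * ‖r^[n] z‖ := hgb _
      _ ≤ C * ((1/2)^n * ‖z‖) := mul_le_mul_of_nonneg_left (hit n z) hC0.le
      _ = C * (1/2)^n * ‖z‖ := by ring
  have hgeo : Summable fun n : ℕ => (1/2 : ℝ)^n :=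
    summable_geometric_of_lt_one (by norm_num) (by norm_num)
  have hsb : ∀ z : Z, Summable fun n => g (r^[n] z) := by
    intro z
    apply Summable.of_norm_bounded (((hgeo.mul_left C).mul_right ‖z‖).congr
      (fun n => by ring)) (fun n => hterm n z)
  set B : Z → W := fun z => ∑' n, g (r^[n] z) with hB
  have hTB : ∀ z, T (B z) = z := by
    intro z
    rw [hB]
    have h1 : T (∑' n, g (r^[n] z)) = ∑' n, T (g (r^[n] z)) := T.map_tsum (hsb z)
    rw [h1]
    have h2 : ∀ n : ℕ, T (g (r^[n] z)) = r^[n] z - r^[n+1] z := by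
      intro n
      rw [Function.iterate_succ_apply', hr]
      simp
    have hsum : HasSum (fun n => T (g (r^[n] z))) z := by
      have hs : Summable fun n => T (g (r^[n] z)) := (hsb z).map T T.continuous
      rw [hs.hasSum_iff_tendsto_nat]
      have h3 : ∀ N : ℕ, ∑ n ∈ Finset.range N, T (g (r^[n] z)) = z - r^[N] z := by
        intro N
        simp only [h2]
        rw [Finset.sum_range_sub' (fun n => r^[n] z)]
        simp
      simp only [h3]
      have h4 : Tendsto (fun N : ℕ => r^[N] z) atTop (nhds 0) := by
        apply squeeze_zero_norm (fun N => hit N z)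
        have := (tendsto_pow_atTop_nhds_zero_of_lt_one (by norm_num : (0:ℝ) ≤ 1/2)
          (by norm_num : (1/2 : ℝ) < 1)).mul_const ‖z‖
        simpa using this
      simpa using tendsto_const_nhds.sub h4
    exact hsum.tsum_eq
  have hBb : ∀ z, ‖B z‖ ≤ (2*C) * ‖z‖ := by
    intro z
    rw [hB]
    have hhs : HasSum (fun n : ℕ => C * (1/2)^n * ‖z‖) (2*C*‖z‖) := by
      have h0 : HasSum (fun n : ℕ => (1/2 : ℝ)^n) 2 := by
        have := hasSum_geometric_of_lt_one (by norm_num : (0:ℝ) ≤ 1/2) (by norm_num)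
        norm_num at this
        exact this
      have := (h0.mul_left C).mul_right ‖z‖
      rw [show 2*C*‖z‖ = C*2*‖z‖ by ring]; exact this
    calc ‖∑' n, g (r^[n] z)‖ ≤ 2*C*‖z‖ := tsum_of_norm_bounded hhs (fun n => hterm n z)
      _ = (2*C) * ‖z‖ := by ring
  have hBc : Continuous B := by
    rw [continuous_iff_continuousAt]
    intro z₀
    set R : ℝ := ‖z₀‖ + 1 with hR
    have hcon : ContinuousOn B (Metric.ball (0:Z) R) := by
      have hsu : Summable (fun n : ℕ => C * R * (1/2)^n) := hgeo.mul_left (C * R)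
      apply continuousOn_tsum (u := fun n : ℕ => C * R * (1/2)^n)
        (fun n => ((hgc.comp (hitc n)).continuousOn)) hsu
      intro n z hz
      have hzR : ‖z‖ ≤ R := by
        rw [Metric.mem_ball, dist_zero_right] at hz
        linarith
      calc ‖g (r^[n] z)‖ ≤ C * (1/2)^n * ‖z‖ := hterm n z
        _ ≤ C * (1/2)^n * R := by
            apply mul_le_mul_of_nonneg_left hzR
            positivity
        _ = C * R * (1/2)^n := by ring
    apply hcon.continuousAt
    apply Metric.isOpen_ball.mem_nhds
    rw [Metric.mem_ball, dist_zero_right, hR]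
    linarith
  refine ⟨B, 2*C + 2, by linarith, hBc, hTB, fun z => ?_⟩
  calc ‖B z‖ ≤ (2*C) * ‖z‖ := hBb z
    _ ≤ (2*C + 2) * ‖z‖ := by
        apply mul_le_mul_of_nonneg_right (by linarith) (norm_nonneg z)

/-- Bartle–Graves selection theorem with a norm bound. -/
theorem stmt_2 {W Z : Type*} [NormedAddCommGroup W] [NormedSpace ℝ W] [CompleteSpace W]
    [NormedAddCommGroup Z] [NormedSpace ℝ Z] [CompleteSpace Z]
    (T : W →L[ℝ] Z) (hT : Function.Surjective T) :
    ∃ (B : Z → W) (M : ℝ), 1 < M ∧ Continuous B ∧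
      (∀ z : Z, T (B z) = z) ∧ (∀ z : Z, ‖B z‖ ≤ M * ‖z‖) := by
  exact bg_iterate T hT (bg_approx T hT)
end
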